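/- Let G = C_2^3 ⊕ C_4 and let U be an atom (minimal zero-sum sequence) over G of length |U| = D(G) = 7. Then 3 ∉ L(U·(−U)), where U·(−U) denotes the multiset union of U with the multiset −U of the inverses of the elements of U. -/

import Mathlib

/-- A minimal zero-sum sequence (an atom): a nonempty multiset of group elements
whose sum is zero and which is not the union of two nonempty zero-sum sequences. -/
def IsMinZeroSumSeq {G : Type*} [AddCommGroup G] (S : Multiset G) : Prop :=
  S ≠ 0 ∧ S.sum = 0 ∧
    ¬ ∃ T₁ T₂ : Multiset G, T₁ ≠ 0 ∧ T₂ ≠ 0 ∧ T₁.sum = 0 ∧ T₂.sum = 0 ∧ S = T₁ + T₂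

/-- The set of lengths of a zero-sum sequence `B`: all `k` such that `B` is a
union of `k` atoms. -/
def lengthSet {G : Type*} [AddCommGroup G] (B : Multiset G) : Set ℕ :=
  {k | ∃ z : Multiset (Multiset G), Multiset.card z = k ∧
        (∀ A ∈ z, IsMinZeroSumSeq A) ∧ z.sum = B}

/-- The system of sets of lengths of the monoid of zero-sum sequences over `G`. -/
def systemOfLengths (G : Type*) [AddCommGroup G] : Set (Set ℕ) :=
  {L | ∃ B : Multiset G, B.sum = 0 ∧ lengthSet B = L}

/-- `hasDavenport G m` : the Davenport constant of `G` equals `m`, i.e. `m` is the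
maximal length of a minimal zero-sum sequence over `G`. -/
def hasDavenport (G : Type*) [AddCommGroup G] (m : ℕ) : Prop :=
  (∃ S : Multiset G, IsMinZeroSumSeq S ∧ Multiset.card S = m) ∧
    ∀ S : Multiset G, IsMinZeroSumSeq S → Multiset.card S ≤ m

set_option linter.unusedSectionVars false

section Aux

variable {G : Type*} [AddCommGroup G] [DecidableEq G]

/-- proper nonempty sub-multisets of an atom have nonzero sum -/
lemma atom_proper_sum_ne {U X : Multiset G} (hU : IsMinZeroSumSeq U)
    (hle : X ≤ U) (h0 : X ≠ 0) (hne : X ≠ U) : X.sum ≠ 0 := by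
  intro hs
  apply hU.2.2
  refine ⟨X, U - X, h0, ?_, hs, ?_, (add_tsub_cancel_of_le hle).symm⟩
  · intro h
    apply hne
    have := tsub_add_cancel_of_le hle
    rw [h, zero_add] at this
    exact this
  · have h2 : (U - X).sum + X.sum = U.sum := by
      rw [← Multiset.sum_add, tsub_add_cancel_of_le hle]
    rw [hs, add_zero, hU.2.1] at h2
    exact h2

lemma atom_map_neg {A : Multiset G} (hA : IsMinZeroSumSeq A) :
    IsMinZeroSumSeq (A.map (fun g => -g)) := by
  have hinv : ∀ B : Multiset G, (B.map (fun g => -g)).map (fun g => -g) = B := by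
    intro B
    rw [Multiset.map_map]
    simp
  refine ⟨by simpa using hA.1, by rw [Multiset.sum_map_neg']; simp [hA.2.1], ?_⟩
  rintro ⟨T₁, T₂, h1, h2, hs1, hs2, heq⟩
  apply hA.2.2
  refine ⟨T₁.map (fun g => -g), T₂.map (fun g => -g), by simpa using h1, by simpa using h2,
    by rw [Multiset.sum_map_neg']; simp [hs1], by rw [Multiset.sum_map_neg']; simp [hs2], ?_⟩
  have := congrArg (fun B : Multiset G => B.map (fun g => -g)) heq
  simpa [hinv, Multiset.map_add] using this

/-- decomposition of a sub-multiset of a sum -/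
lemma le_add_decomp {A X Y : Multiset G} (h : A ≤ X + Y) :
    ∃ S T, S ≤ X ∧ T ≤ Y ∧ A = S + T := by
  refine ⟨A ∩ X, A - X, Multiset.inter_le_right, tsub_le_iff_left.mpr h, ?_⟩
  rw [add_comm, Multiset.sub_add_inter]

lemma decomp3 {A₁ A₂ A₃ X Y : Multiset G} (h : A₁ + A₂ + A₃ = X + Y) :
    ∃ S₁ S₂ S₃ T₁ T₂ T₃ : Multiset G,
      S₁ + S₂ + S₃ = X ∧ T₁ + T₂ + T₃ = Y ∧
      A₁ = S₁ + T₁ ∧ A₂ = S₂ + T₂ ∧ A₃ = S₃ + T₃ := by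
  have h1 : A₁ ≤ X + Y := le_of_le_of_eq (by
    calc A₁ ≤ A₁ + (A₂ + A₃) := le_add_of_nonneg_right zero_le
    _ = A₁ + A₂ + A₃ := by rw [add_assoc]) h
  obtain ⟨S₁, T₁, hS₁, hT₁, hA₁⟩ := le_add_decomp h1
  have h23 : A₂ + A₃ = (X - S₁) + (Y - T₁) := by
    rw [tsub_add_tsub_comm hS₁ hT₁]
    refine eq_tsub_of_add_eq ?_
    rw [← h, hA₁]
    abel
  have h2 : A₂ ≤ (X - S₁) + (Y - T₁) := le_of_le_of_eq
    (le_add_of_nonneg_right zero_le : A₂ ≤ A₂ + A₃) h23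
  obtain ⟨S₂, T₂, hS₂, hT₂, hA₂⟩ := le_add_decomp h2
  have h3 : A₃ = (X - S₁ - S₂) + (Y - T₁ - T₂) := by
    rw [tsub_add_tsub_comm hS₂ hT₂]
    refine eq_tsub_of_add_eq ?_
    rw [← h23, hA₂]
    abel
  refine ⟨S₁, S₂, X - S₁ - S₂, T₁, T₂, Y - T₁ - T₂, ?_, ?_, hA₁, hA₂, h3⟩
  · rw [add_assoc, add_tsub_cancel_of_le hS₂, add_tsub_cancel_of_le hS₁]
  · rw [add_assoc, add_tsub_cancel_of_le hT₂, add_tsub_cancel_of_le hT₁]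

end Aux

section Grp

abbrev GG := (Fin 3 → ZMod 2) × ZMod 4
abbrev GG' := (Fin 3 → ZMod 2) × ZMod 2

def ee : GG := (0, 2)

def phi : GG →+ GG' where
  toFun := fun p => (p.1, (p.2.val : ZMod 2))
  map_zero' := by decide
  map_add' := by decide

lemma phi_eq_zero : ∀ g : GG, phi g = 0 ↔ g = 0 ∨ g = ee := by decide

lemma double_eq : ∀ g : GG, g + g = 0 ∨ g + g = ee := by decide

lemma phi_two : ∀ a : GG', a + a = 0 := by decide

lemma ee_ne : ee ≠ (0 : GG) := by decide

end Grp

/-- No sub-multiset of cardinality 6 of a length-7 atom has sum in the kernel of φ. -/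
lemma no_six {U V : Multiset GG} (hU : IsMinZeroSumSeq U) (h7 : Multiset.card U = 7)
    (hV : V ≤ U) (h6 : Multiset.card V = 6) (hphi : phi V.sum = 0) : False := by
  classical
  have hVsum : V.sum = ee := by
    have hV0 : V ≠ 0 := by
      intro h; rw [h] at h6; simp at h6
    have hVneU : V ≠ U := by
      intro h; rw [h, h7] at h6; omega
    rcases (phi_eq_zero V.sum).1 hphi with h | h
    · exact absurd h (atom_proper_sum_ne hU hV hV0 hVneU)
    · exact h
  have claim : ∀ X : Multiset GG, X ≤ V → X ≠ 0 → Multiset.card X ≤ 5 →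
      phi X.sum ≠ 0 := by
    intro X hXV hX0 hX5 hc
    have hXU : X ≤ U := hXV.trans hV
    have hXneU : X ≠ U := by
      intro h; rw [h, h7] at hX5; omega
    have hs1 : X.sum ≠ 0 := atom_proper_sum_ne hU hXU hX0 hXneU
    have hsX : X.sum = ee := by
      rcases (phi_eq_zero X.sum).1 hc with h | h
      · exact absurd h hs1
      · exact h
    have hXYV : X + (V - X) = V := add_tsub_cancel_of_le hXV
    have hYsum : X.sum + (V - X).sum = V.sum := by
      rw [← Multiset.sum_add, hXYV]
    rw [hsX, hVsum] at hYsum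
    have hY0sum : (V - X).sum = 0 := by
      have h' : ee + (V - X).sum = ee + 0 := by rw [add_zero]; exact hYsum
      exact add_left_cancel h'
    have hcX : 0 < Multiset.card X := Multiset.card_pos.2 hX0
    have hcY : Multiset.card (V - X) = 6 - Multiset.card X := by
      rw [Multiset.card_sub hXV, h6]
    have hYle : V - X ≤ U := le_trans tsub_le_self hV
    have hY0 : V - X ≠ 0 := by
      intro h
      rw [h] at hcY
      simp at hcY
      omega
    have hYneU : V - X ≠ U := by
      intro h
      rw [h, h7] at hcY
      omega
    exact atom_proper_sum_ne hU hYle hY0 hYneU hY0sum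
  -- V has no duplicate elements
  have hnd : V.Nodup := by
    rw [Multiset.nodup_iff_count_le_one]
    intro a
    by_contra hcnt
    push_neg at hcnt
    have hle2 : ({a, a} : Multiset GG) ≤ V := by
      rw [Multiset.le_iff_count]
      intro x
      by_cases hx : x = a
      · subst hx
        simp only [Multiset.insert_eq_cons, Multiset.count_cons_self,
          Multiset.count_singleton, if_pos rfl]
        simp only [if_true]
        omega
      · simp [Multiset.count_cons, Multiset.count_singleton, hx]
    refine claim {a, a} hle2 (by simp) (by simp) ?_
    have : ({a, a} : Multiset GG).sum = a + a := by simp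
    rw [this, map_add]
    exact phi_two _
  -- pass to a Finset
  set F : Finset GG := ⟨V, hnd⟩ with hF
  have hFcard : F.card = 6 := h6
  obtain ⟨g0, hg0⟩ : F.Nonempty := Finset.card_pos.mp (by omega)
  set F5 : Finset GG := F.erase g0 with hF5
  have hF5card : F5.card = 5 := by
    rw [hF5, Finset.card_erase_of_mem hg0, hFcard]
  set f : Finset GG → GG' := fun B => phi (∑ b ∈ B, b) with hf
  have hinj : Set.InjOn f ↑F5.powerset := by
    intro B hB C hC hfBC
    simp only [Finset.coe_powerset, Set.mem_preimage, Set.mem_powerset_iff,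
      Finset.coe_subset, Finset.mem_coe, Finset.mem_powerset] at hB hC
    by_contra hne
    have hBsub : B ⊆ F5 := hB
    have hCsub : C ⊆ F5 := hC
    have hBd : (∑ b ∈ B, b) = (∑ b ∈ B \ C, b) + ∑ b ∈ B ∩ C, b := by
      rw [← Finset.sum_union (Finset.disjoint_sdiff_inter B C), Finset.sdiff_union_inter]
    have hCd : (∑ b ∈ C, b) = (∑ b ∈ C \ B, b) + ∑ b ∈ B ∩ C, b := by
      rw [Finset.inter_comm]
      rw [← Finset.sum_union (Finset.disjoint_sdiff_inter C B), Finset.sdiff_union_inter]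
    have hE : phi (∑ b ∈ B \ C, b) = phi (∑ b ∈ C \ B, b) := by
      have h1 : phi (∑ b ∈ B \ C, b) + phi (∑ b ∈ B ∩ C, b)
          = phi (∑ b ∈ C \ B, b) + phi (∑ b ∈ B ∩ C, b) := by
        rw [← map_add, ← map_add, ← hBd, ← hCd]
        exact hfBC
      exact add_right_cancel h1
    set D : Finset GG := (B \ C) ∪ (C \ B) with hD
    have hDsum : phi (∑ b ∈ D, b) = 0 := by
      rw [hD, Finset.sum_union disjoint_sdiff_sdiff, map_add, hE]
      exact phi_two _
    have hDne : D ≠ ∅ := by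
      intro h
      rw [hD, Finset.union_eq_empty] at h
      exact hne (Finset.Subset.antisymm
        (Finset.sdiff_eq_empty_iff_subset.mp h.1)
        (Finset.sdiff_eq_empty_iff_subset.mp h.2))
    have hDsub : D ⊆ F5 := by
      rw [hD]
      exact Finset.union_subset ((Finset.sdiff_subset).trans hBsub)
        ((Finset.sdiff_subset).trans hCsub)
    refine claim D.val ?_ ?_ ?_ ?_
    · have : D ⊆ F := hDsub.trans (Finset.erase_subset _ _)
      exact Finset.val_le_iff.mpr this
    · rw [Ne, Finset.val_eq_zero]
      exact hDne
    · have := Finset.card_le_card hDsub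
      rw [hF5card] at this
      exact this
    · have hid : (∑ b ∈ D, b) = D.val.sum := by
        change (D.val.map (fun b => b)).sum = D.val.sum
        rw [Multiset.map_id']
      rw [← hid]
      exact hDsum
  have hcard := Finset.card_le_card_of_injOn f (fun a _ => Finset.mem_univ (f a)) hinj
  rw [Finset.card_powerset, hF5card, Finset.card_univ] at hcard
  have : Fintype.card GG' = 16 := by
    simp [Fintype.card_prod, Fintype.card_fun]
  rw [this] at hcard
  norm_num at hcard

lemma classify {U S T A : Multiset GG} (hU : IsMinZeroSumSeq U) (h7 : Multiset.card U = 7)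
    (hS : S ≤ U) (hT : T ≤ U) (hA : A = S + T.map (fun g => -g))
    (hAatom : IsMinZeroSumSeq A) :
    (S.sum + S.sum = ee ∧ Multiset.card A ≤ 5) ∨
    (S.sum + S.sum = 0 ∧ Multiset.card A = 2) ∨ S + T = U := by
  classical
  have hTsum : T.sum = S.sum := by
    have h0 : A.sum = 0 := hAatom.2.1
    rw [hA, Multiset.sum_add, Multiset.sum_map_neg'] at h0
    exact (add_neg_eq_zero.mp h0).symm
  by_cases hg : ∃ g, g ∈ S ∧ g ∈ T
  · obtain ⟨g, hgS, hgT⟩ := hg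
    have hP : ({g, -g} : Multiset GG) ≤ A := by
      rw [hA]
      have h1 : ({g} : Multiset GG) ≤ S := Multiset.singleton_le.mpr hgS
      have h2 : ({-g} : Multiset GG) ≤ T.map (fun g => -g) :=
        Multiset.singleton_le.mpr (Multiset.mem_map_of_mem _ hgT)
      have h3 := add_le_add h1 h2
      simpa [Multiset.singleton_add] using h3
    have hPsum : ({g, -g} : Multiset GG).sum = 0 := by simp
    have hAP : A = {g, -g} := by
      by_contra hne
      apply hAatom.2.2
      refine ⟨{g, -g}, A - {g, -g}, by simp, ?_, hPsum, ?_,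
        (add_tsub_cancel_of_le hP).symm⟩
      · intro h
        apply hne
        have h4 := add_tsub_cancel_of_le hP
        rw [h, add_zero] at h4
        exact h4.symm
      · have h2 : ({g,-g} : Multiset GG).sum + (A - {g,-g}).sum = A.sum := by
          rw [← Multiset.sum_add, add_tsub_cancel_of_le hP]
        rw [hPsum, hAatom.2.1, zero_add] at h2
        exact h2
    have hcard2 : Multiset.card A = 2 := by rw [hAP]; simp
    have hcardS : Multiset.card S = 1 := by
      have hc : Multiset.card S + Multiset.card T = 2 := by
        rw [hA, Multiset.card_add, Multiset.card_map] at hcard2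
        exact hcard2
      have h1 : 0 < Multiset.card S := Multiset.card_pos_iff_exists_mem.mpr ⟨g, hgS⟩
      have h2 : 0 < Multiset.card T := Multiset.card_pos_iff_exists_mem.mpr ⟨g, hgT⟩
      omega
    obtain ⟨a, ha⟩ := Multiset.card_eq_one.mp hcardS
    have hag : a = g := by
      rw [ha] at hgS
      exact (Multiset.mem_singleton.mp hgS).symm
    have hSsum : S.sum = g := by rw [ha, hag]; simp
    rcases double_eq g with h | h
    · right; left; exact ⟨by rw [hSsum]; exact h, hcard2⟩
    · left; exact ⟨by rw [hSsum]; exact h, by omega⟩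
  · push_neg at hg
    have hVle : S + T ≤ U := by
      rw [Multiset.le_iff_count]
      intro x
      rw [Multiset.count_add]
      by_cases hxS : x ∈ S
      · have hxT : Multiset.count x T = 0 := by
          rw [Multiset.count_eq_zero]; exact hg x hxS
        rw [hxT, add_zero]
        exact Multiset.le_iff_count.mp hS x
      · have hxS0 : Multiset.count x S = 0 := Multiset.count_eq_zero.mpr hxS
        rw [hxS0, zero_add]
        exact Multiset.le_iff_count.mp hT x
    by_cases hVU : S + T = U
    · right; right; exact hVU
    · left
      have hV0 : S + T ≠ 0 := by
        intro h
        have hS0 : S = 0 ∧ T = 0 := by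
          have hc := congrArg Multiset.card h
          rw [Multiset.card_add] at hc
          simp only [Multiset.card_zero] at hc
          constructor <;> (rw [← Multiset.card_eq_zero]; omega)
        apply hAatom.1
        rw [hA, hS0.1, hS0.2]
        simp
      have hVsum : (S + T).sum = S.sum + S.sum := by rw [Multiset.sum_add, hTsum]
      have hVne : (S + T).sum ≠ 0 := atom_proper_sum_ne hU hVle hV0 hVU
      rw [hVsum] at hVne
      have hdd : S.sum + S.sum = ee := by
        rcases double_eq S.sum with h | h
        · exact absurd h hVne
        · exact h
      refine ⟨hdd, ?_⟩
      have hcV : Multiset.card (S + T) ≤ 7 := by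
        have := Multiset.card_le_card hVle
        omega
      have hne7 : Multiset.card (S + T) ≠ 7 := by
        intro h
        exact hVU (Multiset.eq_of_le_of_card_le hVle (by rw [h7, h]))
      have hne6 : Multiset.card (S + T) ≠ 6 := by
        intro h
        exact no_six hU h7 hVle h (by rw [hVsum, map_add]; exact phi_two _)
      have hcA : Multiset.card A = Multiset.card (S + T) := by
        rw [hA, Multiset.card_add, Multiset.card_add, Multiset.card_map]
      omega

lemma type7 {U S T A B C : Multiset GG} (hAatom : IsMinZeroSumSeq A)
    (hBatom : IsMinZeroSumSeq B) (hCatom : IsMinZeroSumSeq C)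
    (hA : A = S + T.map (fun g => -g)) (hST : S + T = U)
    (hsum : A + B + C = U + U.map (fun g => -g)) : False := by
  have hmapA : A.map (fun g => -g) = S.map (fun g => -g) + T := by
    rw [hA, Multiset.map_add, Multiset.map_map]
    simp
  have hW : U + U.map (fun g => -g) = A + A.map (fun g => -g) := by
    rw [hmapA, hA, ← hST, Multiset.map_add]
    abel
  have hBC : B + C = A.map (fun g => -g) := by
    have h1 : A + (B + C) = A + A.map (fun g => -g) := by
      rw [← add_assoc, hsum, hW]
    exact add_left_cancel h1
  exact (atom_map_neg hAatom).2.2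
    ⟨B, C, hBatom.1, hCatom.1, hBatom.2.1, hCatom.2.1, hBC.symm⟩


/-- Lemma 5.6: for `G = C₂³ ⊕ C₄` and an atom `U` over `G` of length
`|U| = D(G) = 7`, one has `3 ∉ L(U·(-U))`. -/
theorem stmt19 (U : Multiset ((Fin 3 → ZMod 2) × ZMod 4))
    (hU : IsMinZeroSumSeq U) (hcard : Multiset.card U = 7) :
    3 ∉ lengthSet (U + U.map (fun g => -g)) := by
  rintro ⟨z, hz3, hzat, hzsum⟩
  obtain ⟨A₁, A₂, A₃, rfl⟩ := Multiset.card_eq_three.mp hz3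
  have hat1 : IsMinZeroSumSeq A₁ := hzat _ (by simp)
  have hat2 : IsMinZeroSumSeq A₂ := hzat _ (by simp)
  have hat3 : IsMinZeroSumSeq A₃ := hzat _ (by simp)
  have hsum : A₁ + A₂ + A₃ = U + U.map (fun g => -g) := by
    simp only [Multiset.insert_eq_cons, Multiset.sum_cons, Multiset.sum_singleton] at hzsum
    rw [← add_assoc] at hzsum
    exact hzsum
  obtain ⟨S₁, S₂, S₃, N₁, N₂, N₃, hSpart, hNpart, hA₁, hA₂, hA₃⟩ := decomp3 hsum
  have hle3 : ∀ {a b c : Multiset GG}, a + b + c = U → a ≤ U := by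
    intro a b c h
    calc a ≤ a + b := le_add_of_nonneg_right zero_le
    _ ≤ a + b + c := le_add_of_nonneg_right zero_le
    _ = U := h
  have hS1le : S₁ ≤ U := hle3 hSpart
  have hS2le : S₂ ≤ U := hle3 (a := S₂) (b := S₁) (c := S₃) (by rw [← hSpart]; abel)
  have hS3le : S₃ ≤ U := hle3 (a := S₃) (b := S₁) (c := S₂) (by rw [← hSpart]; abel)
  have hinv : ∀ B : Multiset GG, (B.map (fun g => -g)).map (fun g => -g) = B := by
    intro B
    rw [Multiset.map_map]
    simp
  set T₁ := N₁.map (fun g => -g) with hT₁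
  set T₂ := N₂.map (fun g => -g) with hT₂
  set T₃ := N₃.map (fun g => -g) with hT₃
  have hTpart : T₁ + T₂ + T₃ = U := by
    rw [hT₁, hT₂, hT₃, ← Multiset.map_add, ← Multiset.map_add, hNpart, hinv]
  have hT1le : T₁ ≤ U := hle3 hTpart
  have hT2le : T₂ ≤ U := hle3 (a := T₂) (b := T₁) (c := T₃) (by rw [← hTpart]; abel)
  have hT3le : T₃ ≤ U := hle3 (a := T₃) (b := T₁) (c := T₂) (by rw [← hTpart]; abel)
  have hA₁' : A₁ = S₁ + T₁.map (fun g => -g) := by rw [hT₁, hinv]; exact hA₁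
  have hA₂' : A₂ = S₂ + T₂.map (fun g => -g) := by rw [hT₂, hinv]; exact hA₂
  have hA₃' : A₃ = S₃ + T₃.map (fun g => -g) := by rw [hT₃, hinv]; exact hA₃
  have E1 : (S₁.sum + S₁.sum = ee ∧ Multiset.card A₁ ≤ 5) ∨
      (S₁.sum + S₁.sum = 0 ∧ Multiset.card A₁ = 2) := by
    rcases classify hU hcard hS1le hT1le hA₁' hat1 with c | c | hc
    · exact Or.inl c
    · exact Or.inr c
    · exact (type7 hat1 hat2 hat3 hA₁' hc hsum).elim
  have E2 : (S₂.sum + S₂.sum = ee ∧ Multiset.card A₂ ≤ 5) ∨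
      (S₂.sum + S₂.sum = 0 ∧ Multiset.card A₂ = 2) := by
    rcases classify hU hcard hS2le hT2le hA₂' hat2 with c | c | hc
    · exact Or.inl c
    · exact Or.inr c
    · exact (type7 hat2 hat1 hat3 hA₂' hc (by rw [← hsum]; abel)).elim
  have E3 : (S₃.sum + S₃.sum = ee ∧ Multiset.card A₃ ≤ 5) ∨
      (S₃.sum + S₃.sum = 0 ∧ Multiset.card A₃ = 2) := by
    rcases classify hU hcard hS3le hT3le hA₃' hat3 with c | c | hc
    · exact Or.inl c
    · exact Or.inr c
    · exact (type7 hat3 hat1 hat2 hA₃' hc (by rw [← hsum]; abel)).elim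
  have hd123 : S₁.sum + S₂.sum + S₃.sum = 0 := by
    have h := congrArg Multiset.sum hSpart
    rw [Multiset.sum_add, Multiset.sum_add, hU.2.1] at h
    exact h
  have hdd : (S₁.sum + S₁.sum) + (S₂.sum + S₂.sum) + (S₃.sum + S₃.sum) = 0 := by
    have h : (S₁.sum + S₁.sum) + (S₂.sum + S₂.sum) + (S₃.sum + S₃.sum)
        = (S₁.sum + S₂.sum + S₃.sum) + (S₁.sum + S₂.sum + S₃.sum) := by abel
    rw [h, hd123, add_zero]
  have hcards : Multiset.card A₁ + Multiset.card A₂ + Multiset.card A₃ = 14 := by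
    have h := congrArg Multiset.card hsum
    rw [Multiset.card_add, Multiset.card_add, Multiset.card_add, Multiset.card_map,
      hcard] at h
    omega
  rcases E1 with ⟨he1, hc1⟩ | ⟨he1, hc1⟩ <;>
    rcases E2 with ⟨he2, hc2⟩ | ⟨he2, hc2⟩ <;>
      rcases E3 with ⟨he3, hc3⟩ | ⟨he3, hc3⟩ <;>
        first
          | (rw [he1, he2, he3] at hdd; exact absurd hdd (by decide))
          | omega
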